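/- Let k, a ∈ ℝ with k ∉ {1, 2}, and let L : ℝ[X] → ℝ be a linear functional such that L(D_{n,k}·D_{m,k}) = hₙ(k)·δ_{n,m} for all n, m ∈ ℕ, where h₀(k) = 2 − k and hₙ(k) = aⁿ for n ≥ 1. Then for every n ∈ ℕ, the even moments are given explicitly by L(X^{2n}) = −(1/2) · ((k−2)^{2n}/(k−1)^{n+1}) · (−a)ⁿ · ( k/(k−2) + Σ_{j=0}^{n} B(1/2, j) · (4(k−1)/(k−2)²)ʲ ), where B(1/2, j) = (1/2)·(1/2 − 1)···(1/2 − j + 1)/j! denotes the generalized binomial coefficient (with B(1/2, 0) = 1). -/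

import Mathlib

open Polynomial

/-- The Dickson polynomial of the `(k+1)`-th kind with real parameters `k, a`,
as a polynomial in `ℝ[X]`, defined by the three-term recurrence. -/
noncomputable def dicksonP (k a : ℝ) : ℕ → Polynomial ℝ
  | 0 => C (2 - k)
  | 1 => X
  | n + 2 => X * dicksonP k a (n + 1) - C a * dicksonP k a n

/-- The generalized binomial coefficient `B(1/2, j)`. -/
noncomputable def halfChoose (j : ℕ) : ℝ :=
  (∏ i ∈ Finset.range j, (1 / 2 - (i : ℝ))) / (j.factorial : ℝ)


/-- `bb N j = C(N,j) - C(N,j-1)` with the convention `bb N 0 = 1`. -/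
noncomputable def bb (N : ℕ) : ℕ → ℝ
  | 0 => 1
  | j + 1 => (N.choose (j+1) : ℝ) - (N.choose j : ℝ)

/-- Row polynomials `W(N,p) = ∑_{j=0}^p bb N j x^(p-j)`, defined recursively. -/
noncomputable def Wf (x : ℝ) : ℕ → ℕ → ℝ
  | 0, 0 => 1
  | 0, p + 1 => x ^ (p+1) - x ^ p
  | _ + 1, 0 => 1
  | N + 1, p + 1 => Wf x N (p+1) + Wf x N p

lemma Wf_zero (x : ℝ) (N : ℕ) : Wf x N 0 = 1 := by cases N <;> rfl

lemma Wf_succ (x : ℝ) (N p : ℕ) : Wf x (N+1) (p+1) = Wf x N (p+1) + Wf x N p := rfl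

lemma bb_pascal (N j : ℕ) : bb (N+1) (j+1) = bb N (j+1) + bb N j := by
  cases j with
  | zero =>
      show ((N+1).choose 1 : ℝ) - ((N+1).choose 0 : ℝ) = ((N.choose 1 : ℝ) - (N.choose 0 : ℝ)) + 1
      simp [Nat.choose_one_right]
  | succ j =>
      simp only [bb, Nat.choose_succ_succ (N) (j+1), Nat.choose_succ_succ (N) j]
      push_cast; ring

lemma Wf_L1 (x : ℝ) : ∀ N p, Wf x N (p+1) = x * Wf x N p + bb N (p+1) := by
  intro N
  induction N with
  | zero =>
      intro p
      cases p with
      | zero =>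
          show x ^ 1 - x ^ 0 = x * Wf x 0 0 + bb 0 1
          simp [Wf, bb]
          ring
      | succ p =>
          show x ^ (p+2) - x ^ (p+1) = x * (x ^ (p+1) - x ^ p) + bb 0 (p+2)
          simp [bb, Nat.choose_eq_zero_of_lt]; ring
  | succ N ihN =>
      intro p
      cases p with
      | zero =>
          rw [Wf_succ, ihN 0, Wf_zero, Wf_zero, bb_pascal]
          simp [bb]
          ring
      | succ p =>
          rw [Wf_succ x N (p+1), Wf_succ x N p, ihN (p+1), ihN p, bb_pascal]
          ring

lemma bb_odd_zero (q : ℕ) : bb (2*q+1) (q+1) = 0 := by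
  have h : (2*q+1).choose (q+1) = (2*q+1).choose q := by
    rw [← Nat.choose_symm (by omega : q+1 ≤ 2*q+1)]
    congr 1
    omega
  simp [bb, h]

lemma bb_even_symm (n : ℕ) : bb (2*n) (n+1) = -(bb (2*n) n) := by
  cases n with
  | zero => simp [bb]
  | succ n =>
      have h : (2*(n+1)).choose (n+2) = (2*(n+1)).choose n := by
        rw [← Nat.choose_symm (by omega : n+2 ≤ 2*(n+1))]
        congr 1
        omega
      show ((2*(n+1)).choose (n+2) : ℝ) - ((2*(n+1)).choose (n+1) : ℝ)
          = -(((2*(n+1)).choose (n+1) : ℝ) - ((2*(n+1)).choose n : ℝ))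
      rw [h]; ring

lemma Wf_boundary (x : ℝ) (q : ℕ) : Wf x (2*q+2) (q+1) = (1+x) * Wf x (2*q+1) q := by
  have h1 : Wf x (2*q+2) (q+1) = Wf x (2*q+1) (q+1) + Wf x (2*q+1) q := Wf_succ x (2*q+1) q
  rw [h1, Wf_L1 x (2*q+1) q, bb_odd_zero]
  ring

lemma Wf_key (x : ℝ) (n : ℕ) :
    x * Wf x (2*n+2) (n+1) = (1+x)^2 * Wf x (2*n) n - (1+x) * bb (2*n) n := by
  have h1 : Wf x (2*n+2) (n+1) = Wf x (2*n+1) (n+1) + Wf x (2*n+1) n := Wf_succ x (2*n+1) n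
  have h2 : x * Wf x (2*n+1) n = Wf x (2*n+1) (n+1) - bb (2*n+1) (n+1) := by
    rw [Wf_L1 x (2*n+1) n]; ring
  have h3 : Wf x (2*n+1) (n+1) = (1+x) * Wf x (2*n) n + bb (2*n) (n+1) := by
    rw [Wf_succ x (2*n) n, Wf_L1 x (2*n) n]; ring
  rw [h1]
  rw [mul_add, h2, h3, bb_odd_zero, bb_even_symm]
  ring

lemma halfChoose_cb : ∀ n : ℕ,
    ((n:ℝ)+1) * (halfChoose (n+1) * (-4)^(n+1)) = -2 * (Nat.centralBinom n : ℝ) := by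
  intro n
  induction n with
  | zero => norm_num [halfChoose, Nat.centralBinom]
  | succ n ih =>
      have hfacne : ((n+1).factorial : ℝ) ≠ 0 := by positivity
      have hfac : halfChoose (n+2) * ((n:ℝ)+2) = halfChoose (n+1) * (1/2 - ((n:ℝ)+1)) := by
        simp only [halfChoose, Finset.prod_range_succ, Nat.factorial_succ (n+1)]
        push_cast
        field_simp
        ring
      have hcb : ((n:ℝ)+1) * (Nat.centralBinom (n+1) : ℝ)
          = 2*(2*(n:ℝ)+1) * (Nat.centralBinom n : ℝ) := by
        exact_mod_cast Nat.succ_mul_centralBinom_succ n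
      have hne : ((n:ℝ)+1) ≠ 0 := by positivity
      apply mul_left_cancel₀ hne
      rw [pow_succ ((-4:ℝ)) (n+1)]
      push_cast
      linear_combination (-4*((n:ℝ)+1) * (-4:ℝ)^(n+1)) * hfac + (4*(n:ℝ)+2) * ih + 2 * hcb

lemma bb_central : ∀ n : ℕ, ((n:ℝ)+1) * bb (2*n) n = (Nat.centralBinom n : ℝ) := by
  intro n
  cases n with
  | zero => simp [bb, Nat.centralBinom]
  | succ n =>
      have h : (2*n+2).choose (n+1) * (n+1) = (2*n+2).choose n * (n+2) := by
        have := Nat.choose_succ_right_eq (2*n+2) n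
        rwa [show 2*n+2-n = n+2 by omega] at this
      have h' : ((2*n+2).choose (n+1) : ℝ) * ((n:ℝ)+1) = ((2*n+2).choose n : ℝ) * ((n:ℝ)+2) := by
        exact_mod_cast h
      simp only [bb, Nat.centralBinom, show 2*(n+1) = 2*n+2 from rfl]
      push_cast
      linear_combination h'

lemma halfChoose_bb (n : ℕ) : halfChoose (n+1) * (2*(4:ℝ)^n) = bb (2*n) n * (-1)^n := by
  have h1 := halfChoose_cb n
  have h2 := bb_central n
  have hne : ((n:ℝ)+1) ≠ 0 := by positivity
  have h3 : halfChoose (n+1) * (-4:ℝ)^(n+1) = -2 * bb (2*n) n := by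
    apply mul_left_cancel₀ hne
    rw [h1, ← h2]; ring
  have h4 : ((-4:ℝ))^(n+1) = -((-1:ℝ)^n * 4^n * 4) := by
    rw [show ((-4:ℝ)) = (-1) * 4 by norm_num, mul_pow, pow_succ, pow_succ]
    ring
  have hE : ((-1:ℝ)^n) * ((-1:ℝ)^n) = 1 := by
    rw [← mul_pow]; norm_num
  rw [h4] at h3
  linear_combination (-((-1:ℝ)^n)/2) * h3 + (-2 * halfChoose (n+1) * (4:ℝ)^n) * hE

theorem dickson_even_moments (k a : ℝ) (hk1 : k ≠ 1) (hk2 : k ≠ 2)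
    (L : Polynomial ℝ →ₗ[ℝ] ℝ)
    (hL : ∀ n m : ℕ, L (dicksonP k a n * dicksonP k a m) =
      if n = m then (if n = 0 then 2 - k else a ^ n) else 0) :
    ∀ n : ℕ,
      L (X ^ (2 * n)) =
        -(1 / 2) * ((k - 2) ^ (2 * n) / (k - 1) ^ (n + 1)) * (-a) ^ n *
          (k / (k - 2) +
            ∑ j ∈ Finset.range (n + 1),
              halfChoose j * (4 * (k - 1) / (k - 2) ^ 2) ^ j) := by
  have h2k : (2:ℝ) - k ≠ 0 := sub_ne_zero.mpr (fun h => hk2 h.symm)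
  have hk2' : k - 2 ≠ 0 := sub_ne_zero.mpr hk2
  have hk1' : k - 1 ≠ 0 := sub_ne_zero.mpr hk1
  -- Step 1: L kills all Dickson polynomials except D_0 (where it is 1)
  have hLD : ∀ m : ℕ, L (dicksonP k a m) = if m = 0 then 1 else 0 := by
    intro m
    have h := hL m 0
    have hd0 : dicksonP k a 0 = C (2 - k) := rfl
    rw [hd0] at h
    have hmul : dicksonP k a m * C (2-k) = (2-k) • dicksonP k a m := by
      rw [smul_eq_C_mul]; ring
    rw [hmul, map_smul, smul_eq_mul] at h
    rcases eq_or_ne m 0 with hm | hm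
    · subst hm
      norm_num at h ⊢
      apply mul_left_cancel₀ h2k
      rw [h]; ring
    · simp only [if_neg hm] at h ⊢
      exact (mul_eq_zero.mp h).resolve_left h2k
  -- Step 2: closed form for L (X^N * D_m)
  have key : ∀ N m : ℕ, L (X ^ N * dicksonP k a m) =
      if N < m ∨ (N + m) % 2 = 1 then 0
      else a ^ ((N + m) / 2) * Wf (1-k) N ((N - m) / 2) := by
    intro N
    induction N with
    | zero =>
        intro m
        rw [pow_zero, one_mul, hLD m]
        rcases m with _ | m
        · rw [if_pos rfl, if_neg (show ¬((0:ℕ) < 0 ∨ (0 + 0) % 2 = 1) by omega)]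
          simp [Wf_zero]
        · rw [if_neg (Nat.succ_ne_zero m), if_pos (Or.inl (Nat.succ_pos m))]
    | succ N ih =>
        intro m
        rcases m with _ | m
        · -- m = 0 : X^{N+1} D_0 = (2-k) • (X^N D_1)
          have hmul : X ^ (N+1) * dicksonP k a 0 = (2-k) • (X ^ N * dicksonP k a 1) := by
            show X ^ (N+1) * C (2-k) = (2-k) • (X ^ N * X)
            rw [smul_eq_C_mul]; ring
          rw [hmul, map_smul, smul_eq_mul, ih 1]
          rcases Nat.even_or_odd N with hN | hN
          · obtain ⟨q, hq⟩ := hN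
            rw [if_pos (by omega), if_pos (by omega)]
            ring
          · obtain ⟨q, hq⟩ := hN
            subst hq
            rw [if_neg (by omega), if_neg (by omega)]
            simp only [Nat.add_zero, Nat.sub_zero]
            rw [show (2*q+1+1)/2 = q+1 by omega, show (2*q+1-1)/2 = q by omega,
              show 2*q+1+1 = 2*q+2 from rfl, Wf_boundary]
            ring
        · -- m+1 : X^{N+1} D_{m+1} = X^N D_{m+2} + a • (X^N D_m)
          have hrec : dicksonP k a (m+2) = X * dicksonP k a (m+1) - C a * dicksonP k a m := rfl
          have hmul : X ^ (N+1) * dicksonP k a (m+1)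
              = X ^ N * dicksonP k a (m+2) + a • (X ^ N * dicksonP k a m) := by
            rw [smul_eq_C_mul, hrec]; ring
          rw [hmul, map_add, map_smul, smul_eq_mul, ih (m+2), ih m]
          by_cases hpar : (N + m) % 2 = 1
          · rw [if_pos (by omega), if_pos (by omega), if_pos (by omega)]
            ring
          · by_cases h1 : N < m
            · rw [if_pos (by omega), if_pos (by omega), if_pos (by omega)]
              ring
            · by_cases h2 : N = m
              · subst h2
                rw [if_pos (by omega), if_neg (by omega), if_neg (by omega)]
                rw [show (N+N)/2 = N by omega, show (N-N)/2 = 0 by omega,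
                  show (N+1+(N+1))/2 = N+1 by omega, show (N+1-(N+1))/2 = 0 by omega,
                  Wf_zero, Wf_zero, pow_succ]
                ring
              · have h3 : m + 2 ≤ N := by omega
                obtain ⟨p, hp⟩ : ∃ p, N - m = 2*p + 2 := ⟨(N-m-2)/2, by omega⟩
                rw [if_neg (by omega), if_neg (by omega), if_neg (by omega)]
                rw [show (N+1+(m+1))/2 = (N+m)/2+1 by omega,
                  show (N+1-(m+1))/2 = p+1 by omega,
                  show (N+(m+2))/2 = (N+m)/2+1 by omega,
                  show (N-(m+2))/2 = p by omega,
                  show (N-m)/2 = p+1 by omega,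
                  Wf_succ]
                ring
  -- Step 3: the cleared algebraic formula, by induction
  have F : ∀ n : ℕ, 2*(k-1)^(n+1) * (a^n * Wf (1-k) (2*n) n)
      = (k-2)^(2*n) * ((-1)^n * a^n) *
        (k + (k-2) * ∑ j ∈ Finset.range (n+1), halfChoose j * (4*(k-1)/(k-2)^2)^j) := by
    intro n
    induction n with
    | zero =>
        rw [show Wf (1-k) 0 0 = 1 from Wf_zero (1-k) 0]
        norm_num [halfChoose]
        ring
    | succ n ih =>
        have hkey := Wf_key (1-k) n
        have hhh := halfChoose_bb n
        have hE : ((-1:ℝ)^n) * ((-1:ℝ)^n) = 1 := by rw [← mul_pow]; norm_num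
        have hsq : ((k:ℝ)-2)^2 ≠ 0 := pow_ne_zero _ hk2'
        have ht : (k-2)^(2*n) * (k-2)^2 * (4*(k-1)/(k-2)^2)^(n+1)
            = (4:ℝ)^n * 4 * (k-1)^(n+1) := by
          have e1 : ((k:ℝ)-2)^(2*n) * (k-2)^2 = ((k-2)^2)^(n+1) := by
            rw [← pow_mul]
            ring
          rw [e1, div_pow, mul_comm (((k-2)^2)^(n+1)), div_mul_cancel₀ _ (pow_ne_zero _ hsq)]
          rw [mul_pow, pow_succ, pow_succ]
        rw [Finset.sum_range_succ (fun j => halfChoose j * (4*(k-1)/(k-2)^2)^j) (n+1)]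
        rw [show 2*(n+1) = 2*n+2 from rfl]
        rw [pow_succ (k-1) (n+1), pow_succ a n, pow_succ (-1:ℝ) n,
          show ((k:ℝ)-2)^(2*n+2) = (k-2)^(2*n) * (k-2)^2 by rw [← pow_add]]
        linear_combination (-(a*(k-2)^2)) * ih + (-(2*(k-1)^(n+1)*(a^n*a))) * hkey +
          ((-1:ℝ)^n*(a^n*a)*(k-2)*halfChoose (n+1)) * ht +
          (2*(-1:ℝ)^n*(a^n*a)*(k-1)^(n+1)*(k-2)) * hhh +
          (2*(bb (2*n) n)*(a^n*a)*(k-1)^(n+1)*(k-2)) * hE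
  -- Step 4: assemble
  intro n
  have hv := key (2*n) 0
  rw [if_neg (by omega)] at hv
  rw [show (2*n+0)/2 = n by omega, show (2*n-0)/2 = n by omega] at hv
  have hmul : X ^ (2*n) * dicksonP k a 0 = (2-k) • (X ^ (2*n) : Polynomial ℝ) := by
    show X ^ (2*n) * C (2-k) = (2-k) • (X ^ (2*n) : Polynomial ℝ)
    rw [smul_eq_C_mul]; ring
  rw [hmul, map_smul, smul_eq_mul] at hv
  have hFn := F n
  have hBn : ((k:ℝ)-1)^(n+1) ≠ 0 := pow_ne_zero _ hk1'
  rw [neg_pow a n]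
  have hLval : L (X ^ (2*n)) = a^n * Wf (1-k) (2*n) n / (2-k) := by
    rw [eq_div_iff h2k]
    linear_combination hv
  have hne2 : -(2*((k:ℝ)-1)^(n+1)*(k-2)) ≠ 0 := by
    simp only [neg_ne_zero]
    positivity
  have hRHS : -(1 / 2) * ((k - 2) ^ (2 * n) / (k - 1) ^ (n + 1)) * ((-1)^n * a ^ n) *
        (k / (k - 2) +
          ∑ j ∈ Finset.range (n + 1), halfChoose j * (4 * (k - 1) / (k - 2) ^ 2) ^ j)
      = (k-2)^(2*n) * ((-1)^n * a^n) *
          (k + (k-2) * ∑ j ∈ Finset.range (n+1), halfChoose j * (4*(k-1)/(k-2)^2)^j)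
        / (-(2*(k-1)^(n+1)*(k-2))) := by
    rw [eq_div_iff hne2]
    field_simp
  rw [hLval, hRHS, div_eq_div_iff h2k hne2]
  linear_combination (-(k-2)) * hFn
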